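/- Let F be a field and let r < ℓ be natural numbers. For any F-algebra homomorphism φ : F[x₁, …, x_ℓ] → F[y₁, …, y_r] between the polynomial rings in ℓ and r variables, the ring F[y₁, …, y_r], regarded as a module over F[x₁, …, x_ℓ] via φ, is a torsion module. -/

import Mathlib

open MvPolynomial

private lemma coord_le_sum {k : ℕ} (s : Fin k →₀ ℕ) (i : Fin k) :
    s i ≤ s.sum fun _ e => e := by
  by_cases hi : i ∈ s.support
  · exact Finset.single_le_sum (fun _ _ => Nat.zero_le _) hi
  · simp [Finsupp.notMem_support_iff.mp hi]

private lemma finite_degSet (k n : ℕ) :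
    Finite {s : Fin k →₀ ℕ | (s.sum fun _ e => e) ≤ n} := by
  apply Finite.of_injective
    (fun s : {s : Fin k →₀ ℕ | (s.sum fun _ e => e) ≤ n} =>
      fun i : Fin k => (⟨s.1 i, Nat.lt_succ_of_le ((coord_le_sum s.1 i).trans s.2)⟩ : Fin (n+1)))
  intro a b hab
  apply Subtype.ext
  ext i
  exact congrArg Fin.val (congrFun hab i)

private lemma card_degSet_le (k n : ℕ) :
    Nat.card {s : Fin k →₀ ℕ | (s.sum fun _ e => e) ≤ n} ≤ (n+1)^k := by
  have h := Nat.card_le_card_of_injective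
    (fun s : {s : Fin k →₀ ℕ | (s.sum fun _ e => e) ≤ n} =>
      fun i : Fin k => (⟨s.1 i, Nat.lt_succ_of_le ((coord_le_sum s.1 i).trans s.2)⟩ : Fin (n+1)))
    (by
      intro a b hab
      apply Subtype.ext
      ext i
      exact congrArg Fin.val (congrFun hab i))
  simpa using h

private lemma card_degSet_ge (k K M : ℕ) (h : k ≤ K) :
    (M+1)^k ≤ Nat.card {s : Fin K →₀ ℕ | (s.sum fun _ e => e) ≤ k * M} := by
  haveI := finite_degSet K (k * M)
  have hinj : Function.Injective
      (fun f : Fin k → Fin (M+1) =>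
        (⟨Finsupp.embDomain (Fin.castLEEmb h)
            (Finsupp.equivFunOnFinite.symm (fun j => (f j : ℕ))), by
          show (Finsupp.embDomain _ _).sum (fun _ e => e) ≤ k * M
          rw [Finsupp.sum_embDomain]
          rw [Finsupp.sum_fintype _ _ (fun _ => rfl)]
          calc (∑ j : Fin k, (Finsupp.equivFunOnFinite.symm (fun j => ((f j : ℕ))) j))
              = ∑ j : Fin k, (f j : ℕ) := by
                simp [Finsupp.equivFunOnFinite]
                rfl
            _ ≤ ∑ _j : Fin k, M :=
                Finset.sum_le_sum (fun j _ => Nat.lt_succ_iff.mp (f j).isLt)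
            _ = k * M := by simp [Finset.sum_const, mul_comm]⟩ :
          {s : Fin K →₀ ℕ | (s.sum fun _ e => e) ≤ k * M})) := by
    intro a b hab
    have h1 := congrArg Subtype.val hab
    have h2 := Finsupp.embDomain_injective _ h1
    have h3 := Finsupp.equivFunOnFinite.symm.injective h2
    funext j
    exact Fin.val_injective (congrFun h3 j)
  have := Nat.card_le_card_of_injective _ hinj
  simp [-Nat.card_coe_set_eq] at this ⊢
  exact this

private lemma deg_bound {F : Type*} [Field F] {l r : ℕ}
    (φ : MvPolynomial (Fin l) F →ₐ[F] MvPolynomial (Fin r) F)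
    (d : ℕ) (hd : ∀ i, (φ (X i)).totalDegree ≤ d) {m : ℕ} {p : MvPolynomial (Fin l) F}
    (hp : p.totalDegree ≤ m) : (φ p).totalDegree ≤ d * m := by
  conv_lhs => rw [p.as_sum]
  rw [map_sum]
  apply totalDegree_finsetSum_le
  intro s hs
  have hsum : (s.sum fun _ e => e) ≤ m := (le_totalDegree hs).trans hp
  rw [monomial_eq, map_mul]
  have hC : φ (C (coeff s p)) = C (coeff s p) := by
    rw [← algebraMap_eq, AlgHom.commutes, algebraMap_eq]
  rw [hC]
  calc (C (coeff s p) * φ (s.prod fun i e => X i ^ e)).totalDegree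
      ≤ (C (coeff s p) : MvPolynomial (Fin r) F).totalDegree
        + (φ (s.prod fun i e => X i ^ e)).totalDegree := totalDegree_mul _ _
    _ = (φ (s.prod fun i e => X i ^ e)).totalDegree := by rw [totalDegree_C, zero_add]
    _ ≤ d * m := by
        rw [map_finsuppProd]
        refine le_trans (totalDegree_finset_prod _ _) ?_
        have step : ∀ i ∈ s.support, (φ (X i ^ s i)).totalDegree ≤ s i * d := by
          intro i _
          rw [map_pow]
          exact (totalDegree_pow _ _).trans (Nat.mul_le_mul_left _ (hd i))
        refine le_trans (Finset.sum_le_sum step) ?_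
        calc ∑ i ∈ s.support, s i * d
              = (s.sum fun _ e => e) * d := by rw [Finsupp.sum, Finset.sum_mul]
          _ ≤ m * d := Nat.mul_le_mul_right _ hsum
          _ = d * m := mul_comm _ _

/-- For `r < ℓ` and any `F`-algebra homomorphism `φ` from the polynomial ring
in `ℓ` variables to the polynomial ring in `r` variables, the target is a
torsion module over the source (via `φ`, so `p • q = φ p * q`). -/
theorem mvPolynomial_target_torsion_of_lt
    (F : Type*) [Field F] (r ℓ : ℕ) (h : r < ℓ)
    (φ : MvPolynomial (Fin ℓ) F →ₐ[F] MvPolynomial (Fin r) F) :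
    ∀ q : MvPolynomial (Fin r) F,
      ∃ p : MvPolynomial (Fin ℓ) F, p ≠ 0 ∧ φ p * q = 0 := by
  suffices hker : ∃ p : MvPolynomial (Fin ℓ) F, p ≠ 0 ∧ φ p = 0 by
    obtain ⟨p, hp0, hp⟩ := hker
    exact fun q => ⟨p, hp0, by rw [hp, zero_mul]⟩
  by_contra hker
  push_neg at hker
  have hinj : Function.Injective φ := by
    intro a b hab
    rcases eq_or_ne (a - b) 0 with h0 | hne
    · exact sub_eq_zero.mp h0
    · exact absurd (by rw [map_sub, hab, sub_self]) (hker (a - b) hne)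
  set d := Finset.univ.sup fun i : Fin ℓ => (φ (X i)).totalDegree with hd
  set M := (d * (r+1) + 1) ^ r with hM
  set m := (r+1) * M with hm
  haveI := finite_degSet ℓ m
  haveI := finite_degSet r (d * m)
  haveI : Fintype {s : Fin ℓ →₀ ℕ | (s.sum fun _ e => e) ≤ m} := Fintype.ofFinite _
  haveI : Fintype {s : Fin r →₀ ℕ | (s.sum fun _ e => e) ≤ d * m} := Fintype.ofFinite _
  let ψ : restrictTotalDegree (Fin ℓ) F m →ₗ[F] restrictTotalDegree (Fin r) F (d * m) :=
    LinearMap.codRestrict _ (φ.toLinearMap.comp (Submodule.subtype _)) (fun x => by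
      rw [mem_restrictTotalDegree]
      exact deg_bound φ d (fun i => Finset.le_sup (f := fun i : Fin ℓ => (φ (X i)).totalDegree) (Finset.mem_univ i))
        ((mem_restrictTotalDegree _ _ _).mp x.2))
  have hψ : Function.Injective ψ := by
    intro x y hxy
    apply Subtype.ext
    apply hinj
    exact congrArg Subtype.val hxy
  have h3 : Module.finrank F (restrictTotalDegree (Fin ℓ) F m)
      ≤ Module.finrank F (restrictTotalDegree (Fin r) F (d * m)) :=
    LinearMap.finrank_le_finrank_of_injective hψ
  have h2 : Module.finrank F (restrictTotalDegree (Fin ℓ) F m)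
      = Nat.card {s : Fin ℓ →₀ ℕ | (s.sum fun _ e => e) ≤ m} := by
    rw [Nat.card_eq_fintype_card]
    exact Module.finrank_eq_card_basis
      (basisRestrictSupport F {n : Fin ℓ →₀ ℕ | (n.sum fun _ e => e) ≤ m})
  have h4 : Module.finrank F (restrictTotalDegree (Fin r) F (d * m))
      = Nat.card {s : Fin r →₀ ℕ | (s.sum fun _ e => e) ≤ d * m} := by
    rw [Nat.card_eq_fintype_card]
    exact Module.finrank_eq_card_basis
      (basisRestrictSupport F {n : Fin r →₀ ℕ | (n.sum fun _ e => e) ≤ d * m})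
  have h1 : (M+1)^(r+1) ≤ Nat.card {s : Fin ℓ →₀ ℕ | (s.sum fun _ e => e) ≤ m} := by
    rw [hm]
    exact card_degSet_ge (r+1) ℓ M h
  have h5 : Nat.card {s : Fin r →₀ ℕ | (s.sum fun _ e => e) ≤ d * m} ≤ (d * m + 1)^r :=
    card_degSet_le r (d * m)
  have e1 : d * m + 1 ≤ (d * (r+1) + 1) * (M+1) := by
    rw [hm]
    nlinarith
  have h6 : (d * m + 1)^r < (M+1)^(r+1) :=
    calc (d * m + 1)^r ≤ ((d * (r+1) + 1) * (M+1))^r := Nat.pow_le_pow_left e1 r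
      _ = M * (M+1)^r := by rw [mul_pow, ← hM]
      _ < (M+1) * (M+1)^r :=
          (Nat.mul_lt_mul_right (Nat.pow_pos (Nat.succ_pos M))).mpr (Nat.lt_succ_self M)
      _ = (M+1)^(r+1) := by rw [pow_succ, mul_comm]
  omega
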